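/- Let ħ>0 and E∈ℝ, and let u₁,u₂:ℝ→ℂ both be square-integrable, continuously differentiable on ℝ, twice differentiable on each of the open intervals (−∞,0), (0,ℓ), (ℓ,∞), and satisfy −(ħ²/(2m))·uᵢ''(x) + V(x)·uᵢ(x) = E·uᵢ(x) on those intervals (i=1,2). Then u₁ and u₂ are linearly dependent: there exist complex numbers (c₁,c₂)≠(0,0) with c₁u₁ + c₂u₂ ≡ 0. In particular, every eigenvalue of the operator −(ħ²/2m)d²/dx² + V is simple. -/

import Mathlib

open Real MeasureTheory Set
open Complex Filter
open scoped Topology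

noncomputable section


/-- derivative of conjugate -/
lemma hasDerivAt_conj' {w : ℝ → ℂ} {w' : ℂ} {x : ℝ} (hw : HasDerivAt w w' x) :
    HasDerivAt (fun y => (starRingEnd ℂ) (w y)) ((starRingEnd ℂ) w') x := by
  simpa [Function.comp_def] using (Complex.conjCLE.toContinuousLinearMap.hasFDerivAt.comp_hasDerivAt x hw)

lemma hasDerivAt_re' {w : ℝ → ℂ} {w' : ℂ} {x : ℝ} (hw : HasDerivAt w w' x) :
    HasDerivAt (fun y => (w y).re) w'.re x := by
  simpa [Function.comp_def] using (Complex.reCLM.hasFDerivAt.comp_hasDerivAt x hw)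

/-- derivative of `x ↦ (a x * conj (b x)).re` -/
lemma hasDerivAt_re_mul_conj {a b : ℝ → ℂ} {a' b' : ℂ} {x : ℝ}
    (ha : HasDerivAt a a' x) (hb : HasDerivAt b b' x) :
    HasDerivAt (fun y => (a y * (starRingEnd ℂ) (b y)).re)
      ((a' * (starRingEnd ℂ) (b x)).re + (a x * (starRingEnd ℂ) b').re) x := by
  have := hasDerivAt_re' ((ha.mul (hasDerivAt_conj' hb)))
  simpa using this

lemma re_mul_conj_self (z : ℂ) : (z * (starRingEnd ℂ) z).re = ‖z‖ ^ 2 := by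
  rw [Complex.mul_conj]
  simp [Complex.normSq_eq_norm_sq, ← Complex.ofReal_pow]

lemma re_mul_conj_comm (a b : ℂ) : (a * (starRingEnd ℂ) b).re = (b * (starRingEnd ℂ) a).re := by
  simp [Complex.mul_re]; ring

lemma hasDerivAt_norm_sq {w : ℝ → ℂ} {w' : ℂ} {x : ℝ} (hw : HasDerivAt w w' x) :
    HasDerivAt (fun y => ‖w y‖ ^ 2) (2 * (w' * (starRingEnd ℂ) (w x)).re) x := by
  have h := hasDerivAt_re_mul_conj hw hw
  have : (fun y => (w y * (starRingEnd ℂ) (w y)).re) = fun y => ‖w y‖ ^ 2 := by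
    funext y; exact re_mul_conj_self _
  rw [this] at h
  convert h using 1
  rw [re_mul_conj_comm (w x) w']; ring

lemma abs_two_re_mul_conj_le (a b : ℂ) : |2 * (a * (starRingEnd ℂ) b).re| ≤ ‖a‖ ^ 2 + ‖b‖ ^ 2 := by
  have h1 : |(a * (starRingEnd ℂ) b).re| ≤ ‖a‖ * ‖b‖ := by
    calc |(a * (starRingEnd ℂ) b).re| ≤ ‖a * (starRingEnd ℂ) b‖ :=
          Complex.abs_re_le_norm _
      _ = ‖a‖ * ‖b‖ := by
          simp
  have h2 : 2 * (‖a‖ * ‖b‖) ≤ ‖a‖ ^ 2 + ‖b‖ ^ 2 := by nlinarith [sq_nonneg (‖a‖ - ‖b‖)]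
  calc |2 * (a * (starRingEnd ℂ) b).re| = 2 * |(a * (starRingEnd ℂ) b).re| := by
        rw [abs_mul]; norm_num
    _ ≤ 2 * (‖a‖ * ‖b‖) := by linarith
    _ ≤ _ := h2



lemma hasDerivAt_of_eventually_ne {f g : ℝ → ℂ} {x : ℝ}
    (hd : ∀ᶠ y in 𝓝[≠] x, HasDerivAt f (g y) y)
    (hf : ContinuousAt f x) (hg : ContinuousAt g x) : HasDerivAt f (g x) x := by
  set s : Set ℝ := {y | HasDerivAt f (g y) y} with hs
  have hmemgt : s ∈ 𝓝[>] x := nhdsWithin_mono x (fun y hy => ne_of_gt hy) hd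
  have hmemlt : s ∈ 𝓝[<] x := nhdsWithin_mono x (fun y hy => ne_of_lt hy) hd
  have hdiff : DifferentiableOn ℝ f s := fun y hy => hy.differentiableAt.differentiableWithinAt
  have hderiv_eq_gt : ∀ᶠ y in 𝓝[>] x, deriv f y = g y := by
    filter_upwards [hmemgt] with y hy using hy.deriv
  have hderiv_eq_lt : ∀ᶠ y in 𝓝[<] x, deriv f y = g y := by
    filter_upwards [hmemlt] with y hy using hy.deriv
  have hgt : Tendsto (fun y => deriv f y) (𝓝[>] x) (𝓝 (g x)) :=
    (hg.tendsto.mono_left nhdsWithin_le_nhds).congr' (hderiv_eq_gt.mono fun y hy => hy.symm)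
  have hlt : Tendsto (fun y => deriv f y) (𝓝[<] x) (𝓝 (g x)) :=
    (hg.tendsto.mono_left nhdsWithin_le_nhds).congr' (hderiv_eq_lt.mono fun y hy => hy.symm)
  have A : HasDerivWithinAt f (g x) (Ici x) x :=
    hasDerivWithinAt_Ici_of_tendsto_deriv hdiff hf.continuousWithinAt hmemgt hgt
  have B : HasDerivWithinAt f (g x) (Iic x) x :=
    hasDerivWithinAt_Iic_of_tendsto_deriv hdiff hf.continuousWithinAt hmemlt hlt
  simpa using B.union A

lemma hasDerivAt_extend_two {f g : ℝ → ℂ} {p q : ℝ}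
    (h : ∀ x, x ≠ p → x ≠ q → HasDerivAt f (g x) x)
    (hf : Continuous f) (hg : Continuous g) : ∀ x, HasDerivAt f (g x) x := by
  intro x
  by_cases hx : x ≠ p ∧ x ≠ q
  · exact h x hx.1 hx.2
  · apply hasDerivAt_of_eventually_ne _ hf.continuousAt hg.continuousAt
    have hp : ∀ᶠ y in 𝓝[≠] x, y ≠ p := by
      by_cases hxp : x = p
      · subst hxp; exact self_mem_nhdsWithin
      · exact (eventually_ne_nhds hxp).filter_mono nhdsWithin_le_nhds
    have hq : ∀ᶠ y in 𝓝[≠] x, y ≠ q := by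
      by_cases hxq : x = q
      · subst hxq; exact self_mem_nhdsWithin
      · exact (eventually_ne_nhds hxq).filter_mono nhdsWithin_le_nhds
    filter_upwards [hp, hq] with y hyp hyq using h y hyp hyq



lemma not_integrableOn_of_lb {f : ℝ → ℝ} {a c : ℝ} (hc : 0 < c)
    (hf : IntegrableOn f (Ioi a) volume) (hlb : ∀ x ∈ Ioi a, c ≤ f x) : False := by
  have h1 : IntegrableOn (fun _ : ℝ => c) (Ioi a) volume := by
    apply Integrable.mono' hf aestronglyMeasurable_const
    refine (ae_restrict_iff' measurableSet_Ioi).2 (ae_of_all _ fun x hx => ?_)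
    rw [Real.norm_eq_abs, abs_of_pos hc]
    exact hlb x hx
  rw [integrableOn_const_iff] at h1
  rcases h1 with h | h
  · exact hc.ne' (by simpa using h)
  · rw [Real.volume_Ioi] at h; exact (lt_irrefl _ h).elim

/-- Core decay lemma on the right region. -/
lemma decay_lemma {k : ℝ → ℝ} {u : ℝ → ℂ} {x₀ : ℝ}
    (hu : ContDiff ℝ 1 u)
    (hode : ∀ x, HasDerivAt (deriv u) (((k x : ℝ) : ℂ) * u x) x)
    (hk : ∀ x, x₀ < x → 0 ≤ k x)
    (hint : IntegrableOn (fun x => ‖u x‖ ^ 2) (Ioi x₀) volume) :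
    (∀ ε > 0, ∃ X, x₀ < X ∧ ∀ x, X ≤ x → ‖u x‖ ^ 2 ≤ ε) ∧
    (∀ x, x₀ + 1 ≤ x → ‖deriv u x‖ ^ 2 ≤ ‖deriv u (x₀ + 1)‖ ^ 2) := by
  have hdu : ∀ x, HasDerivAt u (deriv u x) x := fun x =>
    ((hu.differentiable one_ne_zero) x).hasDerivAt
  set F : ℝ → ℝ := fun x => 2 * (deriv u x * (starRingEnd ℂ) (u x)).re with hF_def
  have hf : ∀ x, HasDerivAt (fun y => ‖u y‖ ^ 2) (F x) x := fun x =>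
    hasDerivAt_norm_sq (hdu x)
  have hF : ∀ x, HasDerivAt F (2 * (k x * ‖u x‖ ^ 2) + 2 * ‖deriv u x‖ ^ 2) x := by
    intro x
    have h1 := (hasDerivAt_re_mul_conj (hode x) (hdu x)).const_mul 2
    refine h1.congr_deriv ?_
    have e1 : ((((k x : ℝ)) : ℂ) * u x * (starRingEnd ℂ) (u x)).re
        = k x * ‖u x‖ ^ 2 := by
      rw [mul_assoc, Complex.re_ofReal_mul, re_mul_conj_self]
    have e2 : (deriv u x * (starRingEnd ℂ) (deriv u x)).re = ‖deriv u x‖ ^ 2 :=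
      re_mul_conj_self _
    rw [e1, e2]; ring
  have hg : ∀ x, HasDerivAt (fun y => ‖deriv u y‖ ^ 2) (k x * F x) x := by
    intro x
    have h1 := hasDerivAt_norm_sq (hode x)
    convert h1 using 1
    rw [hF_def]
    have : (((k x : ℝ) : ℂ) * u x * (starRingEnd ℂ) (deriv u x)).re
        = k x * (u x * (starRingEnd ℂ) (deriv u x)).re := by
      rw [mul_assoc, Complex.re_ofReal_mul]
    rw [this, re_mul_conj_comm (u x) (deriv u x)]; ring
  -- F ≤ 0 on Ioi x₀
  have hcf : Continuous fun y => ‖u y‖ ^ 2 := by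
    have : Continuous u := hu.continuous
    fun_prop
  have hcF : Continuous F := by
    apply continuous_iff_continuousAt.2 fun x => (hF x).continuousAt
  have hFnonpos : ∀ x ∈ Ioi x₀, F x ≤ 0 := by
    intro x₁ hx₁
    by_contra hpos
    push_neg at hpos
    set c := F x₁ with hc
    -- F is monotone on Ici x₁
    have hFmono : MonotoneOn F (Ici x₁) := by
      apply monotoneOn_of_deriv_nonneg (convex_Ici x₁) hcF.continuousOn
        (fun x _ => (hF x).differentiableAt.differentiableWithinAt)
      intro x hx
      rw [interior_Ici] at hx
      rw [(hF x).deriv]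
      have hk0 : 0 ≤ k x := hk x (hx₁.trans hx)
      positivity
    have hFlb : ∀ x ∈ Ici x₁, c ≤ F x := fun x hx => hFmono self_mem_Ici hx hx.out
    -- f x ≥ f x₁ + c (x - x₁)
    have hphi : MonotoneOn (fun x => ‖u x‖ ^ 2 - c * x) (Ici x₁) := by
      apply monotoneOn_of_deriv_nonneg (convex_Ici x₁)
        (by fun_prop)
        (fun x _ => ((hf x).sub ((hasDerivAt_id x).const_mul c)).differentiableAt.differentiableWithinAt)
      intro x hx
      rw [interior_Ici] at hx
      rw [((hf x).sub ((hasDerivAt_id x).const_mul c)).deriv]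
      have := hFlb x (mem_Ici.2 (le_of_lt hx))
      simp only [mul_one]
      linarith
    set x₂ := x₁ + 1 + |‖u x₁‖ ^ 2| / c with hx₂
    have hlb : ∀ x ∈ Ioi x₂, c ≤ ‖u x‖ ^ 2 := by
      intro x hx
      have hx₂x₁ : x₁ ≤ x₂ := by
        have : 0 ≤ |‖u x₁‖ ^ 2| / c := by positivity
        simp only [hx₂]; linarith
      have h1 := hphi self_mem_Ici (mem_Ici.2 (hx₂x₁.trans (le_of_lt hx))) (hx₂x₁.trans (le_of_lt hx))
      simp only at h1
      have hxge : x₂ ≤ x := le_of_lt hx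
      have : c * x₂ ≤ c * x := by
        apply mul_le_mul_of_nonneg_left hxge (le_of_lt hpos)
      have hexp : c * x₂ = c * x₁ + c + |‖u x₁‖ ^ 2| := by
        have hca : c * (|‖u x₁‖ ^ 2| / c) = |‖u x₁‖ ^ 2| := by field_simp [hpos.ne']
        rw [hx₂]; linear_combination hca
      have habs : -‖u x₁‖ ^ 2 ≤ |‖u x₁‖ ^ 2| := neg_le_abs _
      nlinarith
    exact not_integrableOn_of_lb hpos (hint.mono_set (Ioi_subset_Ioi (by
      have : 0 ≤ |‖u x₁‖ ^ 2| / c := by positivity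
      simp only [hx₂]; linarith [hx₁.out]))) hlb
  -- f is antitone on Ici X for X > x₀
  have hfanti : ∀ X, x₀ < X → AntitoneOn (fun y => ‖u y‖ ^ 2) (Ici X) := by
    intro X hX
    apply antitoneOn_of_deriv_nonpos (convex_Ici X) hcf.continuousOn
      (fun x _ => (hf x).differentiableAt.differentiableWithinAt)
    intro x hx
    rw [interior_Ici] at hx
    rw [(hf x).deriv]
    exact hFnonpos x (hX.trans hx)
  constructor
  · intro ε hε
    by_cases hex : ∃ X ∈ Ioi x₀, ‖u X‖ ^ 2 ≤ ε
    · obtain ⟨X, hX, hXle⟩ := hex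
      exact ⟨X, hX, fun x hx => le_trans (hfanti X hX self_mem_Ici hx hx) hXle⟩
    · push_neg at hex
      exact absurd (not_integrableOn_of_lb hε hint fun x hx => le_of_lt (hex x hx)) not_false
  · intro x hx
    have h1 : x₀ < x₀ + 1 := by linarith
    have hganti : AntitoneOn (fun y => ‖deriv u y‖ ^ 2) (Ici (x₀ + 1)) := by
      apply antitoneOn_of_deriv_nonpos (convex_Ici _)
        (by have := hu.continuous_deriv le_rfl; fun_prop)
        (fun y _ => (hg y).differentiableAt.differentiableWithinAt)
      intro y hy
      rw [interior_Ici] at hy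
      rw [(hg y).deriv]
      have hky : 0 ≤ k y := hk y (h1.trans hy)
      have hFy : F y ≤ 0 := hFnonpos y (h1.trans hy)
      exact mul_nonpos_of_nonneg_of_nonpos hky hFy
    exact hganti self_mem_Ici hx hx



lemma ode_unique {k : ℝ → ℝ} {v dv : ℝ → ℂ} {x₀ : ℝ}
    (hk : Continuous k)
    (hv : ∀ x, HasDerivAt v (dv x) x)
    (hdv : ∀ x, HasDerivAt dv (((k x : ℝ) : ℂ) * v x) x)
    (h0 : v x₀ = 0) (h0' : dv x₀ = 0) : ∀ x, v x = 0 := by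
  intro xs
  set a := min xs x₀ with ha
  set b := max xs x₀ with hb
  have hab : a ≤ b := min_le_max
  obtain ⟨C, hC⟩ := (isCompact_Icc (a := a) (b := b)).exists_bound_of_continuousOn
    hk.continuousOn
  set C' := C + 1 with hC'
  have hx₀ab : x₀ ∈ Icc a b := ⟨min_le_right _ _, le_max_right _ _⟩
  have hC0 : 0 ≤ C := le_trans (norm_nonneg _) (hC x₀ hx₀ab)
  have hC'pos : 0 < C' := by linarith
  have hkb : ∀ x ∈ Icc a b, 1 + |k x| ≤ C' := by
    intro x hx
    have := hC x hx
    rw [Real.norm_eq_abs] at this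
    linarith
  set Efun : ℝ → ℝ := fun x => ‖v x‖ ^ 2 + ‖dv x‖ ^ 2 with hEfun
  set E' : ℝ → ℝ := fun x =>
    2 * (dv x * (starRingEnd ℂ) (v x)).re
      + 2 * ((((k x : ℝ) : ℂ) * v x) * (starRingEnd ℂ) (dv x)).re with hE'def
  have hE : ∀ x, HasDerivAt Efun (E' x) x := fun x =>
    (hasDerivAt_norm_sq (hv x)).add (hasDerivAt_norm_sq (hdv x))
  have hEnonneg : ∀ x, 0 ≤ Efun x := fun x => by positivity
  have hEc : Continuous Efun := continuous_iff_continuousAt.2 fun x => (hE x).continuousAt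
  have hE'bound : ∀ x ∈ Icc a b, |E' x| ≤ C' * Efun x := by
    intro x hx
    have t1 : |2 * (dv x * (starRingEnd ℂ) (v x)).re| ≤ ‖dv x‖ ^ 2 + ‖v x‖ ^ 2 :=
      abs_two_re_mul_conj_le _ _
    have t2 : |2 * ((((k x : ℝ) : ℂ) * v x) * (starRingEnd ℂ) (dv x)).re|
        ≤ |k x| * (‖v x‖ ^ 2 + ‖dv x‖ ^ 2) := by
      have e1 : ((((k x : ℝ) : ℂ) * v x) * (starRingEnd ℂ) (dv x)).re
          = k x * (v x * (starRingEnd ℂ) (dv x)).re := by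
        rw [mul_assoc, Complex.re_ofReal_mul]
      rw [e1]
      have t3 : |2 * (v x * (starRingEnd ℂ) (dv x)).re| ≤ ‖v x‖ ^ 2 + ‖dv x‖ ^ 2 :=
        abs_two_re_mul_conj_le _ _
      calc |2 * (k x * (v x * (starRingEnd ℂ) (dv x)).re)|
          = |k x| * |2 * (v x * (starRingEnd ℂ) (dv x)).re| := by
            rw [show (2:ℝ) * (k x * (v x * (starRingEnd ℂ) (dv x)).re)
              = k x * (2 * (v x * (starRingEnd ℂ) (dv x)).re) by ring, abs_mul]
        _ ≤ |k x| * (‖v x‖ ^ 2 + ‖dv x‖ ^ 2) :=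
            mul_le_mul_of_nonneg_left t3 (abs_nonneg _)
    have hkx := hkb x hx
    have habs := abs_add_le (2 * (dv x * (starRingEnd ℂ) (v x)).re)
      (2 * ((((k x : ℝ) : ℂ) * v x) * (starRingEnd ℂ) (dv x)).re)
    have hknn : 0 ≤ |k x| := abs_nonneg _
    simp only [hE'def, hEfun]
    nlinarith [hEnonneg x]
  have key : Efun xs = 0 := by
    rcases le_total x₀ xs with hdir | hdir
    · -- forward: antitone hplus on Icc x₀ b
      have hxsb : xs ∈ Icc x₀ b := ⟨hdir, le_max_left _ _⟩
      set hplus : ℝ → ℝ := fun x => Efun x * Real.exp (-C' * x) with hhp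
      have hder : ∀ x, HasDerivAt hplus
          (E' x * Real.exp (-C' * x) + Efun x * (Real.exp (-C' * x) * (-C'))) x := by
        intro x
        exact (hE x).mul (((hasDerivAt_id x).const_mul (-C')).exp.congr_deriv (by simp only [id_eq]; ring))
      have hanti : AntitoneOn hplus (Icc x₀ b) := by
        apply antitoneOn_of_deriv_nonpos (convex_Icc _ _)
          (by fun_prop) (fun x _ => (hder x).differentiableAt.differentiableWithinAt)
        intro x hx
        rw [interior_Icc] at hx
        rw [(hder x).deriv]
        have hxab : x ∈ Icc a b := ⟨le_trans (min_le_right _ _) (le_of_lt hx.1), le_of_lt hx.2⟩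
        have h1 := hE'bound x hxab
        have h2 : E' x ≤ C' * Efun x := le_trans (le_abs_self _) h1
        have he := Real.exp_pos (-C' * x)
        nlinarith
      have h1 : hplus xs ≤ hplus x₀ := hanti ⟨le_refl _, le_max_right _ _⟩ hxsb hdir
      have h2 : hplus x₀ = 0 := by simp [hhp, hEfun, h0, h0']
      simp only [hhp] at h1 h2
      have he := Real.exp_pos (-C' * xs)
      have h3 := hEnonneg xs
      nlinarith [h1, h2]
    · -- backward: monotone hminus on Icc a x₀
      have hxsa : xs ∈ Icc a x₀ := ⟨min_le_left _ _, hdir⟩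
      set hminus : ℝ → ℝ := fun x => Efun x * Real.exp (C' * x) with hhm
      have hder : ∀ x, HasDerivAt hminus
          (E' x * Real.exp (C' * x) + Efun x * (Real.exp (C' * x) * C')) x := by
        intro x
        exact (hE x).mul (((hasDerivAt_id x).const_mul C').exp.congr_deriv (by simp only [id_eq]; ring))
      have hmono : MonotoneOn hminus (Icc a x₀) := by
        apply monotoneOn_of_deriv_nonneg (convex_Icc _ _)
          (by fun_prop) (fun x _ => (hder x).differentiableAt.differentiableWithinAt)
        intro x hx
        rw [interior_Icc] at hx
        rw [(hder x).deriv]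
        have hxab : x ∈ Icc a b := ⟨le_of_lt hx.1, le_trans (le_of_lt hx.2) (le_max_right _ _)⟩
        have h1 := hE'bound x hxab
        have h2 : -(C' * Efun x) ≤ E' x := by
          have := neg_abs_le (E' x); linarith
        have he := Real.exp_pos (C' * x)
        nlinarith
      have h1 : hminus xs ≤ hminus x₀ := hmono hxsa ⟨min_le_right _ _, le_refl _⟩ hdir
      have h2 : hminus x₀ = 0 := by simp [hhm, hEfun, h0, h0']
      simp only [hhm] at h1 h2
      have he := Real.exp_pos (C' * xs)
      have h3 := hEnonneg xs
      nlinarith [h1, h2]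
  have : ‖v xs‖ ^ 2 = 0 := by
    have h4 : (0:ℝ) ≤ ‖v xs‖ ^ 2 := by positivity
    have h5 : (0:ℝ) ≤ ‖dv xs‖ ^ 2 := by positivity
    simp only [hEfun] at key
    linarith
  simpa using pow_eq_zero_iff (n := 2) (by norm_num) |>.1 this


end

/-- Any two square-integrable `C¹` solutions of the eigenvalue equation
`-(ħ²/(2m))u'' + V u = E u` (twice differentiable on `(-∞,0)`, `(0,ℓ)`, `(ℓ,∞)`) are
linearly dependent; in particular every eigenvalue of `-(ħ²/2m)d²/dx² + V` is simple.
Here `ωm, ωp` stand for `ω₋, ω₊`, and `hb` for `ħ`. -/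
theorem stmt1
    (m ℓ ωm ωp : ℝ) (hm : 0 < m) (hℓ : 0 ≤ ℓ) (hωm : 0 < ωm) (hωp : 0 < ωp)
    (hne : ℓ = 0 → ωm ≠ ωp)
    (V : ℝ → ℝ)
    (hV : ∀ x : ℝ, V x = if x < 0 then (1/2) * m * ωm^2 * x^2
          else if x ≤ ℓ then 0 else (1/2) * m * ωp^2 * (x - ℓ)^2)
    (hb : ℝ) (hhb : 0 < hb) (E : ℝ)
    (u₁ u₂ : ℝ → ℂ)
    (h₁ : MemLp u₁ 2 volume) (h₂ : MemLp u₂ 2 volume)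
    (h₁' : ContDiff ℝ 1 u₁) (h₂' : ContDiff ℝ 1 u₂)
    (hode₁ : ∀ x : ℝ, (x < 0 ∨ (0 < x ∧ x < ℓ) ∨ ℓ < x) →
        DifferentiableAt ℝ (deriv u₁) x ∧
        -((hb^2/(2*m) : ℝ) : ℂ) * deriv (deriv u₁) x + ((V x : ℝ) : ℂ) * u₁ x
          = ((E : ℝ) : ℂ) * u₁ x)
    (hode₂ : ∀ x : ℝ, (x < 0 ∨ (0 < x ∧ x < ℓ) ∨ ℓ < x) →
        DifferentiableAt ℝ (deriv u₂) x ∧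
        -((hb^2/(2*m) : ℝ) : ℂ) * deriv (deriv u₂) x + ((V x : ℝ) : ℂ) * u₂ x
          = ((E : ℝ) : ℂ) * u₂ x) :
    ∃ c₁ c₂ : ℂ, ¬(c₁ = 0 ∧ c₂ = 0) ∧ ∀ x : ℝ, c₁ * u₁ x + c₂ * u₂ x = 0 := by
  -- the coefficient function
  set k : ℝ → ℝ := fun x => 2 * m / hb ^ 2 * (V x - E) with hk_def
  -- continuity of V and k
  have hVeq : V = fun x => (1/2 * m * ωm ^ 2) * (min x 0) ^ 2
      + (1/2 * m * ωp ^ 2) * (max (x - ℓ) 0) ^ 2 := by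
    funext x
    rw [hV x]
    by_cases hx0 : x < 0
    · rw [if_pos hx0, min_eq_left hx0.le, max_eq_right (by linarith)]
      ring
    · push_neg at hx0
      rw [if_neg (not_lt.2 hx0), min_eq_right hx0]
      by_cases hxl : x ≤ ℓ
      · rw [if_pos hxl, max_eq_right (by linarith)]
        ring
      · push_neg at hxl
        rw [if_neg (not_le.2 hxl), max_eq_left (by linarith)]
        ring
  have hVcont : Continuous V := by
    rw [hVeq]
    apply Continuous.add
    · exact continuous_const.mul ((continuous_id.min continuous_const).pow 2)
    · exact continuous_const.mul (((continuous_id.sub continuous_const).max continuous_const).pow 2)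
  have hkcont : Continuous k := by
    apply continuous_const.mul (hVcont.sub continuous_const)
  have hkCcont : Continuous fun x => ((k x : ℝ) : ℂ) :=
    Complex.continuous_ofReal.comp hkcont
  have hbne : (hb : ℂ) ≠ 0 := by exact_mod_cast hhb.ne'
  have hmne : (m : ℂ) ≠ 0 := by exact_mod_cast hm.ne'
  -- upgrade the ODE to all of ℝ
  have hext : ∀ (u : ℝ → ℂ), ContDiff ℝ 1 u →
      (∀ x : ℝ, (x < 0 ∨ (0 < x ∧ x < ℓ) ∨ ℓ < x) →
        DifferentiableAt ℝ (deriv u) x ∧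
        -((hb^2/(2*m) : ℝ) : ℂ) * deriv (deriv u) x + ((V x : ℝ) : ℂ) * u x
          = ((E : ℝ) : ℂ) * u x) →
      ∀ x, HasDerivAt (deriv u) (((k x : ℝ) : ℂ) * u x) x := by
    intro u hu hode
    apply hasDerivAt_extend_two (p := 0) (q := ℓ)
    · intro x hx0 hxl
      have hcase : x < 0 ∨ (0 < x ∧ x < ℓ) ∨ ℓ < x := by
        rcases lt_trichotomy x 0 with h | h | h
        · exact Or.inl h
        · exact absurd h hx0
        · rcases lt_trichotomy x ℓ with h2 | h2 | h2
          · exact Or.inr (Or.inl ⟨h, h2⟩)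
          · exact absurd h2 hxl
          · exact Or.inr (Or.inr h2)
      obtain ⟨hdiff, heq⟩ := hode x hcase
      have hD : deriv (deriv u) x = ((k x : ℝ) : ℂ) * u x := by
        have h2 : -((hb:ℂ)^2/(2*(m:ℂ))) * deriv (deriv u) x + ((V x : ℝ) : ℂ) * u x
            = ((E : ℝ) : ℂ) * u x := by
          convert heq using 3
          push_cast
          ring
        have hcast : ((k x : ℝ) : ℂ) = 2 * (m:ℂ) / (hb:ℂ) ^ 2 * (((V x : ℝ):ℂ) - (E:ℂ)) := by
          rw [hk_def]
          push_cast
          ring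
        rw [hcast]
        field_simp at h2 ⊢
        linear_combination -h2
      exact hD ▸ hdiff.hasDerivAt
    · exact (hu.continuous_deriv le_rfl)
    · exact hkCcont.mul hu.continuous
  have hode₁' : ∀ x, HasDerivAt (deriv u₁) (((k x : ℝ) : ℂ) * u₁ x) x := hext u₁ h₁' hode₁
  have hode₂' : ∀ x, HasDerivAt (deriv u₂) (((k x : ℝ) : ℂ) * u₂ x) x := hext u₂ h₂' hode₂
  have hdu₁ : ∀ x, HasDerivAt u₁ (deriv u₁ x) x := fun x =>
    ((h₁'.differentiable one_ne_zero) x).hasDerivAt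
  have hdu₂ : ∀ x, HasDerivAt u₂ (deriv u₂ x) x := fun x =>
    ((h₂'.differentiable one_ne_zero) x).hasDerivAt
  -- the Wronskian
  set W : ℝ → ℂ := fun x => u₁ x * deriv u₂ x - u₂ x * deriv u₁ x with hW_def
  have hW : ∀ x, HasDerivAt W 0 x := by
    intro x
    have h := ((hdu₁ x).mul (hode₂' x)).sub ((hdu₂ x).mul (hode₁' x))
    exact h.congr_deriv (by ring)
  have hWconst : ∀ x y, W x = W y := by
    intro x y
    exact is_const_of_deriv_eq_zero (fun z => (hW z).differentiableAt) (fun z => (hW z).deriv) x y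
  -- the right region
  set s : ℝ := 2 * max E 0 / (m * ωp ^ 2) with hs_def
  have hs0 : 0 ≤ s := by positivity
  set x₀ : ℝ := ℓ + 1 + Real.sqrt s with hx₀_def
  have hkpos : ∀ x, x₀ < x → 0 ≤ k x := by
    intro x hx
    have hsq : 0 ≤ Real.sqrt s := Real.sqrt_nonneg s
    have hxl : ℓ < x := by simp only [hx₀_def] at hx; linarith
    have hVx : V x = 1/2 * m * ωp ^ 2 * (x - ℓ) ^ 2 := by
      rw [hV x, if_neg (by push_neg; linarith), if_neg (by push_neg; exact hxl)]
    have hge : Real.sqrt s ≤ x - ℓ := by simp only [hx₀_def] at hx; linarith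
    have hsq2 : s ≤ (x - ℓ) ^ 2 := by
      calc s = Real.sqrt s ^ 2 := (Real.sq_sqrt hs0).symm
        _ ≤ (x - ℓ) ^ 2 := by
            exact pow_le_pow_left₀ hsq hge 2
    have hVE : E ≤ V x := by
      rw [hVx]
      have h1 : 1/2 * m * ωp ^ 2 * s ≤ 1/2 * m * ωp ^ 2 * (x - ℓ) ^ 2 :=
        mul_le_mul_of_nonneg_left hsq2 (by positivity)
      have h2 : 1/2 * m * ωp ^ 2 * s = max E 0 := by
        rw [hs_def]
        field_simp
      have h3 : E ≤ max E 0 := le_max_left _ _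
      linarith
    rw [hk_def]
    apply mul_nonneg (by positivity)
    linarith
  -- decay of both solutions
  have hint₁ : IntegrableOn (fun x => ‖u₁ x‖ ^ 2) (Ioi x₀) volume :=
    ((memLp_two_iff_integrable_sq_norm h₁.aestronglyMeasurable).1 h₁).integrableOn
  have hint₂ : IntegrableOn (fun x => ‖u₂ x‖ ^ 2) (Ioi x₀) volume :=
    ((memLp_two_iff_integrable_sq_norm h₂.aestronglyMeasurable).1 h₂).integrableOn
  obtain ⟨hdec₁, hbd₁⟩ := decay_lemma h₁' hode₁' hkpos hint₁
  obtain ⟨hdec₂, hbd₂⟩ := decay_lemma h₂' hode₂' hkpos hint₂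
  -- the Wronskian vanishes
  have hW0 : ∀ z, W z = 0 := by
    intro z
    by_contra hWne
    have hwpos : 0 < ‖W z‖ := norm_pos_iff.2 hWne
    set M : ℝ := max (‖deriv u₁ (x₀ + 1)‖ ^ 2) (max (‖deriv u₂ (x₀ + 1)‖ ^ 2) 1) with hM_def
    have hM1 : (1:ℝ) ≤ M := le_max_of_le_right (le_max_right _ _)
    have hsqrtM : 1 ≤ Real.sqrt M := by
      rw [show (1:ℝ) = Real.sqrt 1 by simp]
      exact Real.sqrt_le_sqrt (by simpa using hM1)
    have hsqrtMpos : 0 < Real.sqrt M := by linarith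
    set ε : ℝ := ‖W z‖ / 2 with hε_def
    have hεpos : 0 < ε := by positivity
    set δ : ℝ := (ε / (2 * Real.sqrt M)) ^ 2 with hδ_def
    have hδpos : 0 < δ := by positivity
    obtain ⟨X₁, hX₁, hd₁⟩ := hdec₁ δ hδpos
    obtain ⟨X₂, hX₂, hd₂⟩ := hdec₂ δ hδpos
    set x : ℝ := max X₁ (max X₂ (x₀ + 1)) with hx_def
    have hxX₁ : X₁ ≤ x := le_max_left _ _
    have hxX₂ : X₂ ≤ x := le_max_of_le_right (le_max_left _ _)
    have hxx₀ : x₀ + 1 ≤ x := le_max_of_le_right (le_max_right _ _)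
    have hsqδ : Real.sqrt δ = ε / (2 * Real.sqrt M) := by
      rw [hδ_def, Real.sqrt_sq (by positivity)]
    have hb₁ : ‖u₁ x‖ ≤ ε / (2 * Real.sqrt M) := by
      rw [← hsqδ, ← Real.sqrt_sq (norm_nonneg (u₁ x))]
      exact Real.sqrt_le_sqrt (hd₁ x hxX₁)
    have hb₂ : ‖u₂ x‖ ≤ ε / (2 * Real.sqrt M) := by
      rw [← hsqδ, ← Real.sqrt_sq (norm_nonneg (u₂ x))]
      exact Real.sqrt_le_sqrt (hd₂ x hxX₂)
    have hg₁ : ‖deriv u₁ x‖ ≤ Real.sqrt M := by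
      rw [← Real.sqrt_sq (norm_nonneg (deriv u₁ x))]
      apply Real.sqrt_le_sqrt
      exact le_trans (hbd₁ x hxx₀) (le_max_left _ _)
    have hg₂ : ‖deriv u₂ x‖ ≤ Real.sqrt M := by
      rw [← Real.sqrt_sq (norm_nonneg (deriv u₂ x))]
      apply Real.sqrt_le_sqrt
      exact le_trans (hbd₂ x hxx₀) (le_max_of_le_right (le_max_left _ _))
    have hterm₁ : ‖u₁ x‖ * ‖deriv u₂ x‖ ≤ ε / 2 := by
      calc ‖u₁ x‖ * ‖deriv u₂ x‖ ≤ (ε / (2 * Real.sqrt M)) * Real.sqrt M :=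
            mul_le_mul hb₁ hg₂ (norm_nonneg _) (by positivity)
        _ = ε / 2 := by field_simp
    have hterm₂ : ‖u₂ x‖ * ‖deriv u₁ x‖ ≤ ε / 2 := by
      calc ‖u₂ x‖ * ‖deriv u₁ x‖ ≤ (ε / (2 * Real.sqrt M)) * Real.sqrt M :=
            mul_le_mul hb₂ hg₁ (norm_nonneg _) (by positivity)
        _ = ε / 2 := by field_simp
    have hWx : ‖W x‖ ≤ ε := by
      calc ‖W x‖ ≤ ‖u₁ x * deriv u₂ x‖ + ‖u₂ x * deriv u₁ x‖ := norm_sub_le _ _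
        _ = ‖u₁ x‖ * ‖deriv u₂ x‖ + ‖u₂ x‖ * ‖deriv u₁ x‖ := by rw [norm_mul, norm_mul]
        _ ≤ ε / 2 + ε / 2 := add_le_add hterm₁ hterm₂
        _ = ε := by ring
    have hzx : W z = W x := hWconst z x
    rw [hzx] at hwpos
    have hεx : ε = ‖W x‖ / 2 := by rw [hε_def, hzx]
    linarith
  -- conclusion: linear dependence
  by_cases h1z : ∀ x, u₁ x = 0
  · exact ⟨1, 0, by simp, fun x => by simp [h1z x]⟩
  · push_neg at h1z
    obtain ⟨p, hp⟩ := h1z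
    set c : ℂ := u₂ p / u₁ p with hc_def
    refine ⟨-c, 1, by simp, ?_⟩
    set v : ℝ → ℂ := fun x => u₂ x - c * u₁ x with hv_def
    set dv : ℝ → ℂ := fun x => deriv u₂ x - c * deriv u₁ x with hdv_def
    have hv : ∀ x, HasDerivAt v (dv x) x := fun x => (hdu₂ x).sub ((hdu₁ x).const_mul c)
    have hdv : ∀ x, HasDerivAt dv (((k x : ℝ) : ℂ) * v x) x := by
      intro x
      have h := (hode₂' x).sub ((hode₁' x).const_mul c)
      exact h.congr_deriv (by simp only [hv_def]; ring)
    have h0 : v p = 0 := by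
      simp only [hv_def, hc_def]
      field_simp
      simp
    have h0' : dv p = 0 := by
      have hWp := hW0 p
      simp only [hW_def] at hWp
      simp only [hdv_def, hc_def]
      field_simp
      linear_combination hWp
    have hzero := ode_unique hkcont hv hdv h0 h0'
    intro x
    have := hzero x
    simp only [hv_def] at this
    linear_combination this
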